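/- Let E and Y be complex Banach spaces, let κ ≥ 1, and let Λ : Y → Y be a bounded linear operator such that id − Λ is invertible with bounded inverse R = (id − Λ)⁻¹ satisfying ‖R‖ ≤ κ. Let A : E → E, B : Y → E, C : E → Y, D : Y → Y be bounded linear operators with ‖A‖, ‖B‖, ‖C‖, ‖D‖ ≤ ε. Then there exist ε₀ > 0 and C₀ > 0 depending only on κ such that if ε ≤ ε₀ there is a bounded linear operator M : E → Y satisfying the fixed-point equation M = R∘(C + D∘M − M∘A − M∘B∘M), with ‖M‖ ≤ C₀ε and ‖M − R∘C‖ ≤ C₀ε². Moreover the graph F = {(u, Mu) : u ∈ E} is invariant under the block operator L(u,v) := (u + Au + Bv, Λv + Cu + Dv): for every u ∈ E, L(u, Mu) = (w, Mw) where w = u + Au + B(Mu); hence L restricted to F is conjugate, via u ↦ (u, Mu), to the map u ↦ u + Au + B(Mu) on E. -/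

import Mathlib

noncomputable section

private lemma graph_perturbation_aux1 (t : ℝ) (h0 : 0 ≤ t) (h8 : t ≤ 1/8) :
    t + 4*t^2 + 4*t^3 ≤ 2*t := by
  nlinarith [mul_nonneg h0 h0, mul_nonneg (mul_nonneg h0 h0) h0,
    mul_nonneg h0 (sub_nonneg.2 h8), mul_nonneg (mul_nonneg h0 h0) (sub_nonneg.2 h8)]

set_option maxHeartbeats 1000000

/-- Abstract perturbation lemma: if `L₀` acts as the identity on `E` and as `Λ` on `Y`
with `id − Λ` invertible (inverse `R`, `‖R‖ ≤ κ`), and `K = (A B; C D)` is a small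
perturbation, then the eigenspace `E` deforms to an invariant graph `{(u, Mu)}` where `M`
solves the fixed point equation `M = R(C + DM − MA − MBM)`, with `‖M‖ = O(ε)` and
`M = RC + O(ε²)`; moreover `L` restricted to the graph is conjugate to
`u ↦ u + Au + B(Mu)` on `E`. -/
theorem graph_perturbation (κ : ℝ) (hκ : 1 ≤ κ) :
    ∃ ε₀ C₀ : ℝ, 0 < ε₀ ∧ 0 < C₀ ∧
      ∀ (E Y : Type) [NormedAddCommGroup E] [NormedSpace ℂ E] [CompleteSpace E]
        [NormedAddCommGroup Y] [NormedSpace ℂ Y] [CompleteSpace Y]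
        (Λ R : Y →L[ℂ] Y),
        (ContinuousLinearMap.id ℂ Y - Λ) ∘L R = ContinuousLinearMap.id ℂ Y →
        R ∘L (ContinuousLinearMap.id ℂ Y - Λ) = ContinuousLinearMap.id ℂ Y →
        ‖R‖ ≤ κ →
        ∀ (ε : ℝ) (A : E →L[ℂ] E) (B : Y →L[ℂ] E) (C : E →L[ℂ] Y) (D : Y →L[ℂ] Y),
          ‖A‖ ≤ ε → ‖B‖ ≤ ε → ‖C‖ ≤ ε → ‖D‖ ≤ ε → ε ≤ ε₀ →
          ∃ M : E →L[ℂ] Y,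
            M = R ∘L (C + D ∘L M - M ∘L A - M ∘L (B ∘L M)) ∧
            ‖M‖ ≤ C₀ * ε ∧
            ‖M - R ∘L C‖ ≤ C₀ * ε ^ 2 ∧
            ∀ u : E, Λ (M u) + C u + D (M u) = M (u + A u + B (M u)) := by
  have hκ0 : (0:ℝ) < κ := by linarith
  refine ⟨1/(8*κ^2), 5*κ^2, by positivity, by positivity, ?_⟩
  intro E Y _ _ _ _ _ _ Λ R hR1 hR2 hRκ ε A B C D hA hB hC hD hε
  have hε0 : (0:ℝ) ≤ ε := (norm_nonneg A).trans hA
  set r : ℝ := 2*κ*ε with hr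
  have hr0 : (0:ℝ) ≤ r := by positivity
  have hκε : κ*ε ≤ 1/8 := by
    have h1 : κ * ε ≤ κ * (1/(8*κ^2)) := by
      exact mul_le_mul_of_nonneg_left hε (le_of_lt hκ0)
    have h2 : κ * (1/(8*κ^2)) ≤ 1/8 := by
      rw [mul_one_div, div_le_div_iff₀ (by positivity) (by norm_num)]
      nlinarith
    linarith
  have hr14 : r ≤ 1/4 := by rw [hr]; linarith
  set Φ : (E →L[ℂ] Y) → (E →L[ℂ] Y) :=
    fun M => R ∘L (C + D ∘L M - M ∘L A - M ∘L (B ∘L M)) with hΦ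
  -- basic norm bounds
  have hcompbd : ∀ (W : Type) [NormedAddCommGroup W] [NormedSpace ℂ W]
      (f : W →L[ℂ] Y) (g : E →L[ℂ] W) (a b : ℝ), ‖f‖ ≤ a → ‖g‖ ≤ b → 0 ≤ b →
      ‖f ∘L g‖ ≤ a * b := by
    intro W _ _ f g a b hf hg hb
    exact (ContinuousLinearMap.opNorm_comp_le f g).trans
      (mul_le_mul hf hg (norm_nonneg g) ((norm_nonneg f).trans hf))
  have hbound : ∀ M : E →L[ℂ] Y, ‖M‖ ≤ r → ‖Φ M‖ ≤ r := by
    intro M hM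
    have hDM : ‖D ∘L M‖ ≤ ε * r := (ContinuousLinearMap.opNorm_comp_le D M).trans
      (mul_le_mul hD hM (norm_nonneg M) hε0)
    have hMA : ‖M ∘L A‖ ≤ r * ε := (ContinuousLinearMap.opNorm_comp_le M A).trans
      (mul_le_mul hM hA (norm_nonneg A) hr0)
    have hBM : ‖B ∘L M‖ ≤ ε * r := (ContinuousLinearMap.opNorm_comp_le B M).trans
      (mul_le_mul hB hM (norm_nonneg M) hε0)
    have hMBM : ‖M ∘L (B ∘L M)‖ ≤ r * (ε * r) :=
      (ContinuousLinearMap.opNorm_comp_le M (B ∘L M)).trans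
      (mul_le_mul hM hBM (norm_nonneg _) hr0)
    have hinner : ‖C + D ∘L M - M ∘L A - M ∘L (B ∘L M)‖ ≤ ε + ε*r + r*ε + r*(ε*r) :=
      (norm_sub_le _ _).trans (add_le_add ((norm_sub_le _ _).trans
        (add_le_add ((norm_add_le _ _).trans (add_le_add hC hDM)) hMA)) hMBM)
    have h1 : ‖Φ M‖ ≤ κ * (ε + ε*r + r*ε + r*(ε*r)) :=
      (ContinuousLinearMap.opNorm_comp_le R _).trans
        (mul_le_mul hRκ hinner (norm_nonneg _) (le_of_lt hκ0))
    refine h1.trans ?_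
    calc κ*(ε + ε*r + r*ε + r*(ε*r)) = (κ*ε) + 4*(κ*ε)^2 + 4*(κ*ε)^3 := by rw [hr]; ring
      _ ≤ 2*(κ*ε) := graph_perturbation_aux1 _ (mul_nonneg hκ0.le hε0) hκε
      _ = r := by rw [hr]; ring
  have hlip : ∀ M N : E →L[ℂ] Y, ‖M‖ ≤ r → ‖N‖ ≤ r →
      ‖Φ M - Φ N‖ ≤ (5/16) * ‖M - N‖ := by
    intro M N hM hN
    set d : ℝ := ‖M - N‖ with hd
    have hd0 : 0 ≤ d := norm_nonneg _
    have hiden : Φ M - Φ N = R ∘L (D ∘L (M - N) - (M - N) ∘L A -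
        ((M - N) ∘L (B ∘L M) + N ∘L (B ∘L (M - N)))) := by
      rw [hΦ]
      simp only [ContinuousLinearMap.comp_sub, ContinuousLinearMap.sub_comp,
        ContinuousLinearMap.comp_add, ContinuousLinearMap.add_comp]
      abel
    have hDMN : ‖D ∘L (M - N)‖ ≤ ε * d := (ContinuousLinearMap.opNorm_comp_le D _).trans
      (mul_le_mul hD le_rfl hd0 hε0)
    have hMNA : ‖(M - N) ∘L A‖ ≤ d * ε := (ContinuousLinearMap.opNorm_comp_le _ A).trans
      (mul_le_mul le_rfl hA (norm_nonneg A) hd0)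
    have hBM : ‖B ∘L M‖ ≤ ε * r := (ContinuousLinearMap.opNorm_comp_le B M).trans
      (mul_le_mul hB hM (norm_nonneg M) hε0)
    have hBMN : ‖B ∘L (M - N)‖ ≤ ε * d := (ContinuousLinearMap.opNorm_comp_le B _).trans
      (mul_le_mul hB le_rfl hd0 hε0)
    have h1 : ‖(M - N) ∘L (B ∘L M)‖ ≤ d * (ε * r) :=
      (ContinuousLinearMap.opNorm_comp_le _ _).trans
        (mul_le_mul le_rfl hBM (norm_nonneg _) hd0)
    have h2 : ‖N ∘L (B ∘L (M - N))‖ ≤ r * (ε * d) :=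
      (ContinuousLinearMap.opNorm_comp_le _ _).trans
        (mul_le_mul hN hBMN (norm_nonneg _) hr0)
    have hinner : ‖D ∘L (M - N) - (M - N) ∘L A -
        ((M - N) ∘L (B ∘L M) + N ∘L (B ∘L (M - N)))‖ ≤
        ε*d + d*ε + (d*(ε*r) + r*(ε*d)) :=
      (norm_sub_le _ _).trans (add_le_add ((norm_sub_le _ _).trans (add_le_add hDMN hMNA))
        ((norm_add_le _ _).trans (add_le_add h1 h2)))
    have h3 : ‖Φ M - Φ N‖ ≤ κ * (ε*d + d*ε + (d*(ε*r) + r*(ε*d))) := by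
      rw [hiden]
      exact (ContinuousLinearMap.opNorm_comp_le R _).trans
        (mul_le_mul hRκ hinner (norm_nonneg _) (le_of_lt hκ0))
    refine h3.trans ?_
    have key : κ * (ε*d + d*ε + (d*(ε*r) + r*(ε*d))) = (2*(κ*ε) + 2*(κ*ε)*r) * d := by ring
    rw [key]
    have : 2*(κ*ε) + 2*(κ*ε)*r ≤ 5/16 := by
      nlinarith [mul_le_mul hκε hr14 hr0 (by norm_num : (0:ℝ) ≤ 1/8),
        mul_nonneg (mul_nonneg hκ0.le hε0) hr0]
    exact mul_le_mul_of_nonneg_right this hd0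
  -- fixed point in the closed ball
  set s : Set (E →L[ℂ] Y) := Metric.closedBall 0 r with hs
  haveI : CompleteSpace s := Metric.isClosed_closedBall.completeSpace_coe
  haveI : Nonempty s := ⟨⟨0, Metric.mem_closedBall_self hr0⟩⟩
  have hmem : ∀ M : E →L[ℂ] Y, M ∈ s ↔ ‖M‖ ≤ r := by
    intro M; rw [hs, Metric.mem_closedBall, dist_zero_right]
  set f : s → s := fun M => ⟨Φ M, (hmem _).2 (hbound M ((hmem _).1 M.2))⟩ with hf
  have hcontr : ContractingWith (5/16) f := by
    constructor
    · rw [← NNReal.coe_lt_coe]; push_cast; norm_num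
    · refine LipschitzWith.of_dist_le_mul fun x y => ?_
      simp only [Subtype.dist_eq, dist_eq_norm]
      have hco : ((5/16 : NNReal) : ℝ) = 5/16 := by norm_num
      rw [hco]
      exact hlip x y ((hmem _).1 x.2) ((hmem _).1 y.2)
  set M0 : s := ContractingWith.fixedPoint f hcontr with hM0
  have hfixS : f M0 = M0 := hcontr.fixedPoint_isFixedPt
  set M : E →L[ℂ] Y := (M0 : E →L[ℂ] Y) with hM
  have hMr : ‖M‖ ≤ r := (hmem _).1 M0.2
  have hfixeq : M = R ∘L (C + D ∘L M - M ∘L A - M ∘L (B ∘L M)) :=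
    (congrArg Subtype.val hfixS).symm
  refine ⟨M, hfixeq, ?_, ?_, ?_⟩
  · -- ‖M‖ ≤ 5κ²ε
    refine hMr.trans ?_
    rw [hr]
    nlinarith
  · -- ‖M − RC‖ ≤ 5κ²ε²
    have hsub : M - R ∘L C = R ∘L (D ∘L M - M ∘L A - M ∘L (B ∘L M)) := by
      conv_lhs => rw [hfixeq]
      rw [← ContinuousLinearMap.comp_sub]
      congr 1
      abel
    have hDM : ‖D ∘L M‖ ≤ ε * r := (ContinuousLinearMap.opNorm_comp_le D M).trans
      (mul_le_mul hD hMr (norm_nonneg M) hε0)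
    have hMA : ‖M ∘L A‖ ≤ r * ε := (ContinuousLinearMap.opNorm_comp_le M A).trans
      (mul_le_mul hMr hA (norm_nonneg A) hr0)
    have hBM : ‖B ∘L M‖ ≤ ε * r := (ContinuousLinearMap.opNorm_comp_le B M).trans
      (mul_le_mul hB hMr (norm_nonneg M) hε0)
    have hMBM : ‖M ∘L (B ∘L M)‖ ≤ r * (ε * r) :=
      (ContinuousLinearMap.opNorm_comp_le M _).trans
        (mul_le_mul hMr hBM (norm_nonneg _) hr0)
    have hinner : ‖D ∘L M - M ∘L A - M ∘L (B ∘L M)‖ ≤ ε*r + r*ε + r*(ε*r) :=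
      (norm_sub_le _ _).trans (add_le_add ((norm_sub_le _ _).trans (add_le_add hDM hMA)) hMBM)
    have h1 : ‖M - R ∘L C‖ ≤ κ * (ε*r + r*ε + r*(ε*r)) := by
      rw [hsub]
      exact (ContinuousLinearMap.opNorm_comp_le R _).trans
        (mul_le_mul hRκ hinner (norm_nonneg _) (le_of_lt hκ0))
    refine h1.trans ?_
    rw [hr]
    nlinarith [mul_nonneg (mul_nonneg hκ0.le hκ0.le) (mul_nonneg hε0 hε0),
      mul_nonneg hκ0.le hε0, sq_nonneg (κ*ε)]
  · -- invariance of the graph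
    intro u
    have hTop : M - Λ ∘L M = C + D ∘L M - M ∘L A - M ∘L (B ∘L M) := by
      have h := congrArg (fun X => (ContinuousLinearMap.id ℂ Y - Λ) ∘L X) hfixeq
      rw [← ContinuousLinearMap.comp_assoc, hR1, ContinuousLinearMap.id_comp,
        ContinuousLinearMap.sub_comp, ContinuousLinearMap.id_comp] at h
      exact h
    have eu : M u - Λ (M u) = C u + D (M u) - M (A u) - M (B (M u)) := by
      have := ContinuousLinearMap.ext_iff.mp hTop u
      simpa using this
    have hrhs : M (u + A u + B (M u)) = M u + M (A u) + M (B (M u)) := by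
      rw [map_add, map_add]
    rw [hrhs]
    calc Λ (M u) + C u + D (M u)
        = Λ (M u) + (C u + D (M u) - M (A u) - M (B (M u))) + M (A u) + M (B (M u)) := by abel
      _ = Λ (M u) + (M u - Λ (M u)) + M (A u) + M (B (M u)) := by rw [← eu]
      _ = M u + M (A u) + M (B (M u)) := by abel
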